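/- For a non-stationary finite MDP with diameter D (defined as D = max_s min_π sup_t E[time under π, started at s at time t, to reach the trajectory of optimal-value-maximizing states {s_i^*}]), the optimal value function satisfies sp(V_t^*) <= D for all t, where sp(v) = max_s v(s) - min_s v(s). -/
import Mathlib


/-- The span semi-norm. -/
noncomputable def sp {S : Type*} [Fintype S] [Nonempty S] (v : S → ℝ) : ℝ :=
  (⨆ i, v i) - ⨅ i, v i

/-- The Bellman (optimality) operator of the non-stationary MDP at time `t`. -/
noncomputable def bell {S A : Type*} [Fintype S] [Fintype A] [Nonempty A]
    (r : ℕ → S → A → ℝ) (P : ℕ → S → A → S → ℝ) (t : ℕ) (v : S → ℝ) : S → ℝ :=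
  fun s => ⨆ a, (r t s a + ∑ s', P t s a s' * v s')

/-- `bellComp r P t n v = L_t ∘ ⋯ ∘ L_{t+n} v`. -/
noncomputable def bellComp {S A : Type*} [Fintype S] [Fintype A] [Nonempty A]
    (r : ℕ → S → A → ℝ) (P : ℕ → S → A → S → ℝ) : ℕ → ℕ → (S → ℝ) → S → ℝ
  | t, 0, v => bell r P t v
  | t, n + 1, v => bell r P t (bellComp r P (t + 1) n v)

/-- Optimal value function `V_t^* = L_t ∘ ⋯ ∘ L_T 0` of the finite-horizon MDP. -/
noncomputable def Vstar {S A : Type*} [Fintype S] [Fintype A] [Nonempty A]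
    (r : ℕ → S → A → ℝ) (P : ℕ → S → A → S → ℝ) (T t : ℕ) : S → ℝ :=
  bellComp r P t (T - t) (fun _ => 0)

section Aux

variable {S A : Type*} [Fintype S] [Fintype A] [Nonempty A]
  (r : ℕ → S → A → ℝ) (P : ℕ → S → A → S → ℝ)

lemma le_bell (t : ℕ) (v : S → ℝ) (s : S) (a : A) :
    r t s a + ∑ s', P t s a s' * v s' ≤ bell r P t v s := by
  exact le_ciSup (Set.Finite.bddAbove (Set.finite_range
    (fun a => r t s a + ∑ s', P t s a s' * v s'))) a

lemma bell_le (t : ℕ) (v : S → ℝ) (s : S) (M : ℝ)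
    (h : ∀ a, r t s a + ∑ s', P t s a s' * v s' ≤ M) :
    bell r P t v s ≤ M := by
  unfold bell
  exact ciSup_le h

lemma Vstar_succ (T t : ℕ) (htT : t < T) :
    Vstar r P T t = bell r P t (Vstar r P T (t + 1)) := by
  have h : T - t = (T - (t + 1)) + 1 := by omega
  unfold Vstar
  rw [h]
  rfl

end Aux

/-- The span of the optimal value function is bounded by the diameter `D`: if from
every state and start time there is a policy whose expected travel time to the
sequence of optimal-value maximizers `{star i}` is at most `D` (travel times are
encoded by solutions of the one-step hitting-time equations), then `sp V_t^* ≤ D`. -/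
theorem span_Vstar_le_diameter {S A : Type*} [Fintype S] [Nonempty S]
    [Fintype A] [Nonempty A] [DecidableEq S]
    (r : ℕ → S → A → ℝ) (P : ℕ → S → A → S → ℝ) (T : ℕ)
    (hr : ∀ t s a, r t s a ∈ Set.Icc (0 : ℝ) 1)
    (hP : ∀ t s a s', 0 ≤ P t s a s') (hrow : ∀ t s a, ∑ s', P t s a s' = 1)
    (star : ℕ → S)
    (hstar : ∀ i s, Vstar r P T i s ≤ Vstar r P T i (star i))
    (D : ℝ)
    (hD : ∀ s : S, ∃ (π : ℕ → S → A) (h : ℕ → S → ℝ),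
      (∀ t x, 0 ≤ h t x) ∧
      (∀ t x, h t x =
        1 + ∑ y, P t x (π t x) y * (if y = star (t + 1) then 0 else h (t + 1) y)) ∧
      ∀ t, h t s ≤ D) :
    ∀ t, sp (Vstar r P T t) ≤ D := by
  intro t
  obtain ⟨s₀, hs₀⟩ := Finite.exists_min (Vstar r P T t)
  obtain ⟨π, h, hh0, hheq, hhD⟩ := hD s₀
  have h1 : ∀ t x, (1 : ℝ) ≤ h t x := by
    intro t x
    rw [hheq t x]
    have : (0:ℝ) ≤ ∑ y, P t x (π t x) y * (if y = star (t + 1) then 0 else h (t + 1) y) := by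
      apply Finset.sum_nonneg
      intro y _
      apply mul_nonneg (hP _ _ _ _)
      by_cases hy : y = star (t + 1) <;> simp [hy, hh0]
    linarith
  have key : ∀ n t x, T - t ≤ n →
      Vstar r P T t (star t) - Vstar r P T t x ≤ h t x := by
    intro n
    induction n with
    | zero =>
      intro t x ht
      have h0 : T - t = 0 := Nat.le_zero.mp ht
      have hV : ∀ y : S, Vstar r P T t y ∈ Set.Icc (0 : ℝ) 1 := by
        intro y
        have hval : Vstar r P T t y = ⨆ a, r t y a := by
          unfold Vstar
          rw [h0]
          show bell r P t (fun _ => 0) y = _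
          unfold bell
          simp
        rw [hval]
        constructor
        · obtain ⟨a⟩ := (inferInstance : Nonempty A)
          exact le_trans (hr t y a).1 (le_ciSup (Set.Finite.bddAbove (Set.finite_range _)) a)
        · exact ciSup_le fun a => (hr t y a).2
      have hx := (hV x).1
      have hs := (hV (star t)).2
      have := h1 t x
      linarith
    | succ n ih =>
      intro t x ht
      by_cases h' : T - t ≤ n
      · exact ih t x h'
      · have htT : t < T := by omega
        have hstep := Vstar_succ r P T t htT
        have hmaxsucc : Vstar r P T t (star t) ≤ 1 + Vstar r P T (t + 1) (star (t + 1)) := by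
          rw [hstep]
          apply bell_le
          intro a
          have hsum : ∑ s', P t (star t) a s' * Vstar r P T (t + 1) s'
              ≤ Vstar r P T (t + 1) (star (t + 1)) := by
            calc ∑ s', P t (star t) a s' * Vstar r P T (t + 1) s'
                ≤ ∑ s', P t (star t) a s' * Vstar r P T (t + 1) (star (t + 1)) :=
                  Finset.sum_le_sum fun s' _ =>
                    mul_le_mul_of_nonneg_left (hstar (t + 1) s') (hP t (star t) a s')
              _ = Vstar r P T (t + 1) (star (t + 1)) := by
                  rw [← Finset.sum_mul, hrow, one_mul]
          have hru := (hr t (star t) a).2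
          linarith
        have hlow : r t x (π t x) + ∑ y, P t x (π t x) y * Vstar r P T (t + 1) y
            ≤ Vstar r P T t x := by
          rw [hstep]
          exact le_bell r P t _ x (π t x)
        have hsum1 : ∑ y, P t x (π t x) y *
              (Vstar r P T (t + 1) (star (t + 1)) - Vstar r P T (t + 1) y)
            = Vstar r P T (t + 1) (star (t + 1))
              - ∑ y, P t x (π t x) y * Vstar r P T (t + 1) y := by
          simp only [mul_sub, Finset.sum_sub_distrib, ← Finset.sum_mul, hrow, one_mul]
        have hsum2 : ∑ y, P t x (π t x) y *
              (Vstar r P T (t + 1) (star (t + 1)) - Vstar r P T (t + 1) y)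
            ≤ ∑ y, P t x (π t x) y * (if y = star (t + 1) then 0 else h (t + 1) y) := by
          apply Finset.sum_le_sum
          intro y _
          apply mul_le_mul_of_nonneg_left _ (hP t x (π t x) y)
          by_cases hy : y = star (t + 1)
          · simp [hy]
          · simp only [hy, if_false]
            exact ih (t + 1) y (by omega)
        have heq := hheq t x
        have hr0 := (hr t x (π t x)).1
        linarith
  have hsup : ⨆ i, Vstar r P T t i ≤ Vstar r P T t (star t) := ciSup_le (hstar t)
  have hinf : Vstar r P T t s₀ ≤ ⨅ i, Vstar r P T t i := le_ciInf hs₀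
  have hk := key (T - t) t s₀ le_rfl
  have hd := hhD t
  unfold sp
  linarith
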